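/- arXiv:1407.0471 — 4 statements merged into one kernel-verified Lean document; each statement's English description precedes it below -/
import Mathlib

section
/- Let A be a symmetric positive definite q×q real matrix and let B = A⁻¹. Then A is a diagonal matrix if and only if A_{ii} · B_{ii} = 1 for all i ∈ {1,…,q}. -/
open Matrix


/-- A symmetric positive definite matrix `A` is diagonal iff `A i i * (A⁻¹) i i = 1`
for every index `i`. -/
theorem isDiag_iff_diag_mul_inv_diag_eq_one {q : ℕ} (A : Matrix (Fin q) (Fin q) ℝ)
    (hA : A.PosDef) :
    (∀ i j, i ≠ j → A i j = 0) ↔ ∀ i, A i i * A⁻¹ i i = 1 := by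
  have hdet : IsUnit A.det := isUnit_iff_ne_zero.mpr (ne_of_gt hA.det_pos)
  have hdiagpos : ∀ i, 0 < A i i := by
    intro i
    have hne : (Pi.single i 1 : Fin q → ℝ) ≠ 0 := by
      intro h
      have := congrFun h i
      simp at this
    have := hA.dotProduct_mulVec_pos hne
    simpa [dotProduct_single, single_dotProduct] using this
  constructor
  · intro h i
    have hAdiag : A = Matrix.diagonal (fun k => A k k) := by
      ext a b
      by_cases hab : a = b
      · subst hab; simp
      · simp [Matrix.diagonal_apply_ne _ hab, h a b hab]
    have hinv : A⁻¹ = Matrix.diagonal (fun k => (A k k)⁻¹) := by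
      apply Matrix.inv_eq_right_inv
      rw [hAdiag, Matrix.diagonal_mul_diagonal]
      ext a b
      by_cases hab : a = b
      · subst hab
        simp [mul_inv_cancel₀ (ne_of_gt (hdiagpos a))]
      · simp [Matrix.diagonal_apply_ne _ hab, Matrix.one_apply_ne hab]
    rw [hinv, Matrix.diagonal_apply_eq]
    exact mul_inv_cancel₀ (ne_of_gt (hdiagpos i))
  · intro h i j hij
    set B := A⁻¹ with hB
    have hBA : B * A = 1 := A.nonsing_inv_mul hdet
    have hAB : A * B = 1 := A.mul_nonsing_inv hdet
    have hBsymm : Bᵀ = B := hA.inv.isHermitian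
    have hsym : ∀ a b, B a b = B b a := by
      intro a b
      have := congrFun (congrFun hBsymm b) a
      simpa using this
    have hBdiag : ∀ a b, a ≠ b → B a b = 0 := by
      intro a b hab
      set c := A b b with hc
      set e : Fin q → ℝ := Pi.single b 1 with he
      set v : Fin q → ℝ := e - c • (B *ᵥ e) with hv
      have hAv : A *ᵥ v = A *ᵥ e - c • e := by
        rw [hv, Matrix.mulVec_sub, Matrix.mulVec_smul, Matrix.mulVec_mulVec, hAB,
          Matrix.one_mulVec]
      have h1 : e ⬝ᵥ (A *ᵥ e) = A b b := by
        simp [he, single_dotProduct]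
      have h2 : e ⬝ᵥ e = (1 : ℝ) := by
        simp [he, single_dotProduct]
      have h3 : (B *ᵥ e) ⬝ᵥ (A *ᵥ e) = 1 := by
        have hba : (B * A) b b = 1 := by rw [hBA]; simp
        rw [Matrix.mul_apply] at hba
        simp only [he, Matrix.mulVec_single_one, Matrix.col_apply, mul_one, dotProduct]
        calc ∑ k, B k b * A k b = ∑ k, B b k * A k b := by
              refine Finset.sum_congr rfl fun k _ => ?_
              rw [hsym k b]
          _ = 1 := hba
      have h4 : (B *ᵥ e) ⬝ᵥ e = B b b := by
        simp [he, dotProduct_single]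
      have hquad : v ⬝ᵥ (A *ᵥ v) = 0 := by
        rw [hAv, hv]
        rw [sub_dotProduct, dotProduct_sub, dotProduct_sub,
          smul_dotProduct, smul_dotProduct, dotProduct_smul,
          dotProduct_smul, h1, h2, h3, h4]
        have hb := h b
        simp only [smul_eq_mul]
        rw [hc]
        linear_combination (A b b) * hb
      have hv0 : v = 0 := by
        by_contra hvne
        have := hA.dotProduct_mulVec_pos hvne
        rw [star_trivial] at this
        exact absurd hquad (ne_of_gt this)
      have := congrFun hv0 a
      simp only [hv, he, Pi.sub_apply, Pi.smul_apply, Matrix.mulVec_single_one, Matrix.col_apply, mul_one,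
        Pi.single_apply, if_neg hab, Pi.zero_apply, smul_eq_mul] at this
      have hc0 : c ≠ 0 := ne_of_gt (hdiagpos b)
      have : c * B a b = 0 := by linarith
      exact (mul_eq_zero.mp this).resolve_left hc0
    have hBd : B = Matrix.diagonal (fun k => B k k) := by
      ext a b
      by_cases hab : a = b
      · subst hab; simp
      · simp [Matrix.diagonal_apply_ne _ hab, hBdiag a b hab]
    have hAeq : A = B⁻¹ := (A.nonsing_inv_nonsing_inv hdet).symm
    rw [hAeq, hBd, Matrix.inv_diagonal]
    exact Matrix.diagonal_apply_ne _ hij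
end

section
/- Let W be a symmetric positive definite p×p real matrix and let T > 0 be a real number. Define g(Ω) = (det Ω)^{T/2} · exp(−(1/2)·tr(W⁻¹ Ω)) for symmetric positive definite p×p matrices Ω. Then g attains its maximum over the set of symmetric positive definite matrices uniquely at Ω* = T·W; that is, g(Ω) ≤ g(T·W) = (T^p · det W)^{T/2} · e^{−pT/2} for every symmetric positive definite Ω, with equality if and only if Ω = T·W. -/
open Matrix Finset
open scoped MatrixOrder

/-- Scalar core: `x^(T/2) e^(-x/2) ≤ T^(T/2) e^(-T/2)` for `x > 0`. -/
private lemma scalar_le {T x : ℝ} (hT : 0 < T) (hx : 0 < x) :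
    x ^ (T / 2) * Real.exp (-x / 2) ≤ T ^ (T / 2) * Real.exp (-T / 2) := by
  rw [Real.rpow_def_of_pos hx, Real.rpow_def_of_pos hT, ← Real.exp_add, ← Real.exp_add,
    Real.exp_le_exp]
  have h := Real.log_le_sub_one_of_pos (div_pos hx hT)
  rw [Real.log_div hx.ne' hT.ne'] at h
  have h2 : T * (Real.log x - Real.log T) ≤ x - T := by
    calc T * (Real.log x - Real.log T) ≤ T * (x / T - 1) :=
          mul_le_mul_of_nonneg_left h hT.le
      _ = x - T := by field_simp
  linarith
private lemma scalar_lt {T x : ℝ} (hT : 0 < T) (hx : 0 < x) (hne : x ≠ T) :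
    x ^ (T / 2) * Real.exp (-x / 2) < T ^ (T / 2) * Real.exp (-T / 2) := by
  rw [Real.rpow_def_of_pos hx, Real.rpow_def_of_pos hT, ← Real.exp_add, ← Real.exp_add,
    Real.exp_lt_exp]
  have h := Real.log_lt_sub_one_of_pos (div_pos hx hT)
    (by simpa [div_eq_one_iff_eq hT.ne'] using hne)
  rw [Real.log_div hx.ne' hT.ne'] at h
  have h2 : T * (Real.log x - Real.log T) < x - T := by
    calc T * (Real.log x - Real.log T) < T * (x / T - 1) :=
          (mul_lt_mul_iff_right₀ hT).mpr h
      _ = x - T := by field_simp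
  linarith

/-- Conjugation of a positive definite real matrix by an invertible hermitian matrix. -/
private lemma posDef_conj {p : ℕ} {Ω B : Matrix (Fin p) (Fin p) ℝ} (hΩ : Ω.PosDef)
    (hB : B.IsHermitian) (hBdet : IsUnit B.det) : (B * Ω * B).PosDef := by
  have hkey : B * Ω * B = Bᴴ * Ω * B := by rw [hB]
  refine Matrix.PosDef.of_dotProduct_mulVec_pos ?_ ?_
  · rw [hkey]
    exact Matrix.isHermitian_conjTranspose_mul_mul B hΩ.1
  · intro x hx
    have hBx : B *ᵥ x ≠ 0 := by
      have hinj := Matrix.mulVec_injective_iff_isUnit.mpr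
        ((Matrix.isUnit_iff_isUnit_det B).mpr hBdet)
      intro h
      exact hx (hinj (by simpa using h))
    have := hΩ.dotProduct_mulVec_pos hBx
    rw [hkey]
    simpa only [star_mulVec, dotProduct_mulVec, vecMul_vecMul] using this

/-- Trace of a hermitian matrix is the sum of its eigenvalues. -/
private lemma trace_eq_sum_eigenvalues {p : ℕ} {M : Matrix (Fin p) (Fin p) ℝ}
    (hM : M.IsHermitian) : M.trace = ∑ i, hM.eigenvalues i := by
  conv_lhs => rw [hM.spectral_theorem]
  rw [Unitary.conjStarAlgAut_apply, Matrix.trace_mul_cycle]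
  have h1 : (star (hM.eigenvectorUnitary : Matrix (Fin p) (Fin p) ℝ)) *
      (hM.eigenvectorUnitary : Matrix (Fin p) (Fin p) ℝ) = 1 :=
    Matrix.mem_unitaryGroup_iff'.mp hM.eigenvectorUnitary.2
  rw [h1, Matrix.one_mul, Matrix.trace_diagonal]
  simp

private lemma eq_smul_one_of_eigenvalues_const {p : ℕ} {M : Matrix (Fin p) (Fin p) ℝ}
    (hM : M.IsHermitian) {T : ℝ} (h : ∀ i, hM.eigenvalues i = T) : M = T • 1 := by
  have hd : Matrix.diagonal (RCLike.ofReal ∘ hM.eigenvalues : Fin p → ℝ) = T • 1 := by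
    rw [Matrix.smul_one_eq_diagonal]
    have he : (RCLike.ofReal ∘ hM.eigenvalues : Fin p → ℝ) = fun _ => T :=
      funext fun i => by simpa using h i
    rw [he]
  have h1 : (hM.eigenvectorUnitary : Matrix (Fin p) (Fin p) ℝ) *
      (star (hM.eigenvectorUnitary : Matrix (Fin p) (Fin p) ℝ)) = 1 :=
    Matrix.mem_unitaryGroup_iff.mp hM.eigenvectorUnitary.2
  conv_lhs => rw [hM.spectral_theorem, hd]
  rw [Unitary.conjStarAlgAut_apply, Matrix.mul_smul, Matrix.mul_one, Matrix.smul_mul, h1]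

/-- The function `g(Ω) = (det Ω)^(T/2) * exp(-(1/2) tr(W⁻¹ Ω))` over symmetric positive
definite matrices attains its maximum uniquely at `Ω* = T • W`, with maximal value
`(T^p det W)^(T/2) e^(-pT/2)`. -/
theorem likelihood_max_at_T_smul {p : ℕ} (W : Matrix (Fin p) (Fin p) ℝ)
    (hW : W.PosDef) (T : ℝ) (hT : 0 < T) :
    (∀ Ω : Matrix (Fin p) (Fin p) ℝ, Ω.PosDef →
      Ω.det ^ (T / 2) * Real.exp (-(1 / 2) * (W⁻¹ * Ω).trace) ≤
        (T ^ p * W.det) ^ (T / 2) * Real.exp (-(p * T) / 2)) ∧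
    (T • W).det ^ (T / 2) * Real.exp (-(1 / 2) * (W⁻¹ * (T • W)).trace) =
      (T ^ p * W.det) ^ (T / 2) * Real.exp (-(p * T) / 2) ∧
    ∀ Ω : Matrix (Fin p) (Fin p) ℝ, Ω.PosDef →
      (Ω.det ^ (T / 2) * Real.exp (-(1 / 2) * (W⁻¹ * Ω).trace) =
          (T ^ p * W.det) ^ (T / 2) * Real.exp (-(p * T) / 2)
        ↔ Ω = T • W) := by
  classical
  set B := CFC.sqrt W with hBdef
  have hBps : B.PosSemidef := Matrix.nonneg_iff_posSemidef.mp (CFC.sqrt_nonneg W)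
  have hBH : B.IsHermitian := hBps.1
  have hBB : B * B = W := CFC.sqrt_mul_sqrt_self W (Matrix.nonneg_iff_posSemidef.mpr hW.posSemidef)
  have hdetB : B.det ^ 2 = W.det := by
    rw [← hBB, Matrix.det_mul, sq]
  have hdetBne : B.det ≠ 0 := by
    intro h
    have := hW.det_pos
    rw [← hdetB, h] at this
    simp at this
  have hBunit : IsUnit B.det := isUnit_iff_ne_zero.mpr hdetBne
  have hBinv : IsUnit B⁻¹.det := by
    rw [Matrix.det_nonsing_inv]
    exact isUnit_iff_ne_zero.mpr (by simpa using hdetBne)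
  have hBinvH : B⁻¹.IsHermitian := hBH.inv
  have hWinv : W⁻¹ = B⁻¹ * B⁻¹ := by rw [← hBB, Matrix.mul_inv_rev]
  have hBBinv : B * B⁻¹ = 1 := Matrix.mul_nonsing_inv B hBunit
  have hBinvB : B⁻¹ * B = 1 := Matrix.nonsing_inv_mul B hBunit
  have key : ∀ Ω : Matrix (Fin p) (Fin p) ℝ, Ω.PosDef →
      ∃ (M : Matrix (Fin p) (Fin p) ℝ) (hM : M.PosDef),
        Ω = B * M * B ∧
        Ω.det ^ (T / 2) * Real.exp (-(1 / 2) * (W⁻¹ * Ω).trace) =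
          W.det ^ (T / 2) * ∏ i, (hM.1.eigenvalues i ^ (T / 2) *
            Real.exp (-(hM.1.eigenvalues i) / 2)) := by
    intro Ω hΩ
    refine ⟨B⁻¹ * Ω * B⁻¹, posDef_conj hΩ hBinvH hBinv, ?_, ?_⟩
    · rw [Matrix.mul_assoc, Matrix.mul_assoc, hBinvB, Matrix.mul_one, ← Matrix.mul_assoc,
        hBBinv, Matrix.one_mul]
    set M := B⁻¹ * Ω * B⁻¹ with hMdef
    set hM : M.PosDef := posDef_conj hΩ hBinvH hBinv with hMdef2
    have htr : (W⁻¹ * Ω).trace = M.trace := by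
      rw [hWinv, Matrix.mul_assoc, Matrix.trace_mul_comm, hMdef, Matrix.mul_assoc]
    have hdet : Ω.det = W.det * M.det := by
      rw [hMdef, Matrix.det_mul, Matrix.det_mul, Matrix.det_nonsing_inv, Ring.inverse_eq_inv]
      field_simp [hdetBne, ← hdetB]
      rw [hdetB]
    have heig := hM.eigenvalues_pos
    rw [htr, hdet, trace_eq_sum_eigenvalues hM.1, hM.1.det_eq_prod_eigenvalues]
    simp only [RCLike.ofReal_real_eq_id, id]
    rw [Real.mul_rpow hW.det_pos.le (Finset.prod_nonneg fun i _ => (heig i).le),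
      Real.finset_prod_rpow _ _ (fun i _ => (heig i).le) (T / 2) |>.symm,
      show -(1/2 : ℝ) * ∑ i, hM.1.eigenvalues i = ∑ i, -(hM.1.eigenvalues i)/2 by
        rw [Finset.mul_sum]; exact Finset.sum_congr rfl fun i _ => by ring,
      Real.exp_sum, Finset.prod_mul_distrib]
    ring
  have hRHS : (T ^ p * W.det) ^ (T / 2) * Real.exp (-(p * T) / 2) =
      W.det ^ (T / 2) * ∏ _i : Fin p, (T ^ (T / 2) * Real.exp (-T / 2)) := by
    have e1 : ((T : ℝ) ^ p) ^ (T / 2) = (T ^ (T / 2)) ^ p := by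
      rw [← Real.rpow_natCast T p, ← Real.rpow_natCast (T ^ (T / 2)) p,
        ← Real.rpow_mul hT.le, ← Real.rpow_mul hT.le]
      ring_nf
    have e2 : Real.exp (-(p * T) / 2) = Real.exp (-T / 2) ^ p := by
      rw [← Real.exp_nat_mul]; congr 1; push_cast; ring
    rw [Finset.prod_const, Finset.card_univ, Fintype.card_fin,
      Real.mul_rpow (by positivity) hW.det_pos.le, e1, e2, mul_pow]
    ring
  have hineq : ∀ Ω : Matrix (Fin p) (Fin p) ℝ, Ω.PosDef →
      Ω.det ^ (T / 2) * Real.exp (-(1 / 2) * (W⁻¹ * Ω).trace) ≤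
        (T ^ p * W.det) ^ (T / 2) * Real.exp (-(p * T) / 2) := by
    intro Ω hΩ
    obtain ⟨M, hM, hrec, heq⟩ := key Ω hΩ
    rw [heq, hRHS]
    refine mul_le_mul_of_nonneg_left ?_ (Real.rpow_nonneg hW.det_pos.le _)
    refine Finset.prod_le_prod (fun i _ => ?_) (fun i _ => ?_)
    · exact mul_nonneg (Real.rpow_nonneg (hM.eigenvalues_pos i).le _) (Real.exp_pos _).le
    · exact scalar_le hT (hM.eigenvalues_pos i)
  have hval : (T • W).det ^ (T / 2) * Real.exp (-(1 / 2) * (W⁻¹ * (T • W)).trace) =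
      (T ^ p * W.det) ^ (T / 2) * Real.exp (-(p * T) / 2) := by
    have h1 : W⁻¹ * (T • W) = T • (1 : Matrix (Fin p) (Fin p) ℝ) := by
      rw [Matrix.mul_smul, Matrix.nonsing_inv_mul W (isUnit_iff_ne_zero.mpr hW.det_pos.ne')]
    rw [Matrix.det_smul, h1, Matrix.trace_smul, Matrix.trace_one]
    simp only [Fintype.card_fin, smul_eq_mul]
    congr 1
    push_cast
    ring
  refine ⟨hineq, hval, fun Ω hΩ => ⟨fun heq => ?_, fun h => h ▸ hval⟩⟩
  obtain ⟨M, hM, hrec, hg⟩ := key Ω hΩ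
  rw [hg, hRHS] at heq
  have heq' : ∏ i, (hM.1.eigenvalues i ^ (T / 2) * Real.exp (-(hM.1.eigenvalues i) / 2)) =
      ∏ _i : Fin p, (T ^ (T / 2) * Real.exp (-T / 2)) :=
    mul_left_cancel₀ (Real.rpow_pos_of_pos hW.det_pos _).ne' heq
  have hall : ∀ i, hM.1.eigenvalues i = T := by
    by_contra hc
    push_neg at hc
    obtain ⟨j, hj⟩ := hc
    have hlt : ∏ i, (hM.1.eigenvalues i ^ (T / 2) * Real.exp (-(hM.1.eigenvalues i) / 2)) <
        ∏ _i : Fin p, (T ^ (T / 2) * Real.exp (-T / 2)) :=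
      Finset.prod_lt_prod
        (fun i _ => mul_pos (Real.rpow_pos_of_pos (hM.eigenvalues_pos i) _) (Real.exp_pos _))
        (fun i _ => scalar_le hT (hM.eigenvalues_pos i))
        ⟨j, Finset.mem_univ j, scalar_lt hT (hM.eigenvalues_pos j) hj⟩
    exact absurd heq' hlt.ne
  have hM1 : M = T • 1 := eq_smul_one_of_eigenvalues_const hM.1 hall
  rw [hrec, hM1, Matrix.mul_smul, Matrix.mul_one, Matrix.smul_mul, hBB]
end

section
/- Let W be a symmetric positive definite p×p real matrix and T > 0 a real number. Then the likelihood ratio (sup over symmetric positive definite Ω of (det Ω)^{T/2} exp(−(1/2) tr(W⁻¹Ω))) divided by (sup over vectors ω with positive entries of (∏_i ω_i)^{T/2} exp(−(1/2) ∑_i ω_i (W⁻¹)_{ii})) equals ( det(W⁻¹) / ∏_{i=1}^p (W⁻¹)_{ii} )^{−T/2}, which in turn equals ( det W · ∏_{i=1}^p (W⁻¹)_{ii} )^{T/2}. -/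
open Matrix Finset
open scoped MatrixOrder

/-- Scalar inequality: `x ^ (T/2) * exp (-(x/2))` is maximized at `x = T`. -/
lemma scalar_bound {T x : ℝ} (hT : 0 < T) (hx : 0 ≤ x) :
    x ^ (T / 2) * Real.exp (-(x / 2)) ≤ T ^ (T / 2) * Real.exp (-(T / 2)) := by
  rcases eq_or_lt_of_le hx with h | hx
  · rw [← h, Real.zero_rpow (by positivity), zero_mul]
    positivity
  · rw [Real.rpow_def_of_pos hx, Real.rpow_def_of_pos hT, ← Real.exp_add, ← Real.exp_add,
      Real.exp_le_exp]
    have h := Real.log_le_sub_one_of_pos (div_pos hx hT)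
    rw [Real.log_div (ne_of_gt hx) (ne_of_gt hT)] at h
    have hxT : x / T * T = x := div_mul_cancel₀ x hT.ne'
    nlinarith [mul_le_mul_of_nonneg_right h hT.le]

/-- Weighted scalar inequality. -/
lemma term_bound {T a x : ℝ} (hT : 0 < T) (ha : 0 < a) (hx : 0 ≤ x) :
    x ^ (T / 2) * Real.exp (-(x * a / 2)) ≤
      a ^ (-(T / 2)) * (T ^ (T / 2) * Real.exp (-(T / 2))) := by
  have h := scalar_bound hT (mul_nonneg hx ha.le)
  have hxa : (x * a) ^ (T / 2) = x ^ (T / 2) * a ^ (T / 2) := Real.mul_rpow hx ha.le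
  have hap : (0:ℝ) < a ^ (T / 2) := Real.rpow_pos_of_pos ha _
  rw [Real.rpow_neg ha.le]
  have key : x ^ (T / 2) * Real.exp (-(x * a / 2)) =
      (a ^ (T / 2))⁻¹ * ((x * a) ^ (T / 2) * Real.exp (-(x * a / 2))) := by
    rw [hxa]; field_simp
  rw [key]
  exact mul_le_mul_of_nonneg_left h (by positivity)

/-- Trace of a real symmetric matrix equals the sum of its eigenvalues. -/
lemma trace_eq_sum_eigs {n : Type*} [Fintype n] [DecidableEq n] {A : Matrix n n ℝ}
    (hA : A.IsHermitian) : A.trace = ∑ i, hA.eigenvalues i := by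
  simpa using hA.trace_eq_sum_eigenvalues

/-- The likelihood ratio: the supremum of `(det Ω)^(T/2) exp(-(1/2) tr(W⁻¹Ω))` over
symmetric positive definite `Ω`, divided by the supremum of
`(∏ i, ω i)^(T/2) exp(-(1/2) ∑ i, ω i (W⁻¹) i i)` over positive vectors `ω`, equals
`(det W⁻¹ / ∏ i, (W⁻¹) i i)^(-T/2) = (det W * ∏ i, (W⁻¹) i i)^(T/2)`. -/
theorem likelihood_ratio_eq {p : ℕ} (W : Matrix (Fin p) (Fin p) ℝ)
    (hW : W.PosDef) (T : ℝ) (hT : 0 < T) :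
    sSup {x : ℝ | ∃ Ω : Matrix (Fin p) (Fin p) ℝ, Ω.PosDef ∧
          x = Ω.det ^ (T / 2) * Real.exp (-(1 / 2) * (W⁻¹ * Ω).trace)} /
        sSup {x : ℝ | ∃ ω : Fin p → ℝ, (∀ i, 0 < ω i) ∧
          x = (∏ i, ω i) ^ (T / 2) * Real.exp (-(1 / 2) * ∑ i, ω i * W⁻¹ i i)} =
      (W⁻¹.det / ∏ i, W⁻¹ i i) ^ (-(T / 2)) ∧
    (W⁻¹.det / ∏ i, W⁻¹ i i) ^ (-(T / 2)) = (W.det * ∏ i, W⁻¹ i i) ^ (T / 2) := by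
  have hA : (W⁻¹).PosDef := hW.inv
  have hdW : (0:ℝ) < W.det := hW.det_pos
  have hdA : (0:ℝ) < W⁻¹.det := hA.det_pos
  have hdetinv : W⁻¹.det = (W.det)⁻¹ := by
    rw [Matrix.det_nonsing_inv, Ring.inverse_eq_inv']
  -- positive diagonal entries
  have ha : ∀ i, 0 < W⁻¹ i i := by
    intro i
    exact hA.diag_pos
  have hprodA : (0:ℝ) < ∏ i, W⁻¹ i i := Finset.prod_pos fun i _ => ha i
  set C : ℝ := T ^ (T / 2) * Real.exp (-(T / 2)) with hC
  have hCpos : 0 < C := by positivity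
  have e1 : (T ^ p : ℝ) ^ (T / 2) = (T ^ (T / 2)) ^ p := by
    rw [← Real.rpow_natCast T p, ← Real.rpow_mul hT.le, mul_comm, Real.rpow_mul hT.le,
      Real.rpow_natCast]
  -- Numerator supremum
  have hnum : IsGreatest {x : ℝ | ∃ Ω : Matrix (Fin p) (Fin p) ℝ, Ω.PosDef ∧
      x = Ω.det ^ (T / 2) * Real.exp (-(1 / 2) * (W⁻¹ * Ω).trace)}
      (W.det ^ (T / 2) * C ^ p) := by
    constructor
    · refine ⟨T • W, ?_, ?_⟩
      · exact hW.smul hT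
      · have hdet : (T • W).det = T ^ p * W.det := by
          rw [Matrix.det_smul]; simp
        have htr : (W⁻¹ * (T • W)).trace = T * p := by
          rw [Matrix.mul_smul, Matrix.trace_smul,
            Matrix.nonsing_inv_mul W (isUnit_iff_ne_zero.mpr hdW.ne'), Matrix.trace_one]
          simp
        rw [hdet, htr, Real.mul_rpow (by positivity) hdW.le, e1, hC, mul_pow]
        rw [← Real.exp_nat_mul]
        ring_nf
    · rintro x ⟨Ω, hΩ, rfl⟩
      set S := CFC.sqrt W⁻¹ with hSdef
      have hS : S.PosSemidef := (CFC.sqrt_nonneg W⁻¹).posSemidef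
      have hB : (S * Ω * S).PosSemidef := by
        have h := hΩ.posSemidef.conjTranspose_mul_mul_same S
        rwa [hS.1] at h
      have htr : (W⁻¹ * Ω).trace = (S * Ω * S).trace := by
        conv_lhs => rw [← CFC.sqrt_mul_sqrt_self W⁻¹ hA.posSemidef.nonneg]
        rw [mul_assoc, Matrix.trace_mul_comm]
      have hdet : Ω.det = (S * Ω * S).det / W⁻¹.det := by
        have hss : S.det * S.det = W⁻¹.det := by
          rw [← Matrix.det_mul, CFC.sqrt_mul_sqrt_self W⁻¹ hA.posSemidef.nonneg]
        have h2 : (S * Ω * S).det = W⁻¹.det * Ω.det := by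
          rw [Matrix.det_mul, Matrix.det_mul, ← hss]; ring
        rw [h2, mul_div_cancel_left₀ _ hdA.ne']
      set μ := hB.1.eigenvalues with hμdef
      have hμ : ∀ i, 0 ≤ μ i := fun i => hB.eigenvalues_nonneg i
      have htrμ : (S * Ω * S).trace = ∑ i, μ i := trace_eq_sum_eigs hB.1
      have hdetμ : (S * Ω * S).det = ∏ i, μ i := by
        simpa using hB.1.det_eq_prod_eigenvalues
      have step1 : Ω.det ^ (T / 2) * Real.exp (-(1 / 2) * (W⁻¹ * Ω).trace) =
          (W⁻¹.det ^ (T / 2))⁻¹ * ∏ i, (μ i ^ (T / 2) * Real.exp (-(μ i / 2))) := by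
        rw [hdet, htr, htrμ, hdetμ,
          Real.div_rpow (Finset.prod_nonneg fun i _ => hμ i) hdA.le,
          ← Real.finset_prod_rpow _ _ (fun i _ => hμ i),
          show -(1 / 2 : ℝ) * ∑ i, μ i = ∑ i, -(μ i / 2) by
            rw [Finset.mul_sum]; congr 1; ext i; ring,
          Real.exp_sum]
        rw [Finset.prod_mul_distrib]
        ring
      rw [step1]
      have step2 : ∏ i, (μ i ^ (T / 2) * Real.exp (-(μ i / 2))) ≤ C ^ p := by
        calc ∏ i, (μ i ^ (T / 2) * Real.exp (-(μ i / 2))) ≤ ∏ _i : Fin p, C :=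
              Finset.prod_le_prod
                (fun i _ => mul_nonneg (Real.rpow_nonneg (hμ i) _) (Real.exp_pos _).le)
                (fun i _ => scalar_bound hT (hμ i))
          _ = C ^ p := by rw [Finset.prod_const, Finset.card_univ, Fintype.card_fin]
      have hWdet : (W⁻¹.det ^ (T / 2))⁻¹ = W.det ^ (T / 2) := by
        rw [hdetinv, Real.inv_rpow hdW.le, inv_inv]
      rw [hWdet]
      exact mul_le_mul_of_nonneg_left step2 (by positivity)
  -- Denominator supremum
  have hden : IsGreatest {x : ℝ | ∃ ω : Fin p → ℝ, (∀ i, 0 < ω i) ∧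
      x = (∏ i, ω i) ^ (T / 2) * Real.exp (-(1 / 2) * ∑ i, ω i * W⁻¹ i i)}
      ((∏ i, W⁻¹ i i) ^ (-(T / 2)) * C ^ p) := by
    constructor
    · refine ⟨fun i => T / W⁻¹ i i, fun i => div_pos hT (ha i), ?_⟩
      have hsum : ∑ i, T / W⁻¹ i i * W⁻¹ i i = T * p := by
        rw [Finset.sum_congr rfl (fun i _ => div_mul_cancel₀ T (ha i).ne')]
        simp [mul_comm]
      have hprod : ∏ i, T / W⁻¹ i i = T ^ p / ∏ i, W⁻¹ i i := by
        rw [Finset.prod_div_distrib, Finset.prod_const, Finset.card_univ, Fintype.card_fin]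
      rw [hsum, hprod, Real.div_rpow (by positivity) hprodA.le, e1,
        Real.rpow_neg hprodA.le, hC, mul_pow, ← Real.exp_nat_mul]
      ring_nf
    · rintro x ⟨ω, hω, rfl⟩
      have step1 : (∏ i, ω i) ^ (T / 2) * Real.exp (-(1 / 2) * ∑ i, ω i * W⁻¹ i i) =
          ∏ i, (ω i ^ (T / 2) * Real.exp (-(ω i * W⁻¹ i i / 2))) := by
        rw [← Real.finset_prod_rpow _ _ (fun i _ => (hω i).le),
          show -(1 / 2 : ℝ) * ∑ i, ω i * W⁻¹ i i = ∑ i, -(ω i * W⁻¹ i i / 2) by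
            rw [Finset.mul_sum]; congr 1; ext i; ring,
          Real.exp_sum]
        rw [Finset.prod_mul_distrib]
      rw [step1]
      calc ∏ i, (ω i ^ (T / 2) * Real.exp (-(ω i * W⁻¹ i i / 2)))
          ≤ ∏ i, ((W⁻¹ i i) ^ (-(T / 2)) * C) :=
            Finset.prod_le_prod
              (fun i _ => mul_nonneg (Real.rpow_nonneg (hω i).le _) (Real.exp_pos _).le)
              (fun i _ => term_bound hT (ha i) (hω i).le)
        _ = (∏ i, W⁻¹ i i) ^ (-(T / 2)) * C ^ p := by
            rw [Finset.prod_mul_distrib, Finset.prod_const, Finset.card_univ, Fintype.card_fin,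
              ← Real.finset_prod_rpow _ _ (fun i _ => (ha i).le)]
  -- combine
  have hz : (0:ℝ) < W.det * ∏ i, W⁻¹ i i := mul_pos hdW hprodA
  have hsecond : (W⁻¹.det / ∏ i, W⁻¹ i i) ^ (-(T / 2)) = (W.det * ∏ i, W⁻¹ i i) ^ (T / 2) := by
    have h1 : W⁻¹.det / ∏ i, W⁻¹ i i = (W.det * ∏ i, W⁻¹ i i)⁻¹ := by
      rw [hdetinv, div_eq_mul_inv, ← mul_inv]
    rw [h1, Real.inv_rpow hz.le, Real.rpow_neg hz.le, inv_inv]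
  refine ⟨?_, hsecond⟩
  rw [hnum.csSup_eq, hden.csSup_eq, hsecond, Real.mul_rpow hdW.le hprodA.le,
    Real.rpow_neg hprodA.le]
  have h1 : ((∏ i, W⁻¹ i i) ^ (T / 2)) ≠ 0 := (Real.rpow_pos_of_pos hprodA _).ne'
  have h2 : C ^ p ≠ 0 := (pow_pos hCpos p).ne'
  field_simp
end

section
/- Let (Y_i)_{i≥1} be a sequence of independent real random variables on a probability space such that Y_i has the Gaussian distribution with mean μ_i ∈ ℝ and variance 1. For p ≥ 1 set Z_p = ∑_{i=1}^p Y_i² and λ_p = ∑_{i=1}^p μ_i², and assume that the sequence (λ_p/p)_{p≥1} is bounded. Then Z_p/p − 1 − λ_p/p converges to 0 almost surely as p → ∞. -/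
open MeasureTheory ProbabilityTheory Filter



open Real Set
open scoped ENNReal NNReal

lemma aux_deriv (x : ℝ) : HasDerivAt (fun x : ℝ => -x * exp (-(1/2) * x ^ 2))
    (x ^ 2 * exp (-(1/2) * x ^ 2) - exp (-(1/2) * x ^ 2)) x := by
  have h1 : HasDerivAt (fun x : ℝ => -(1/2) * x ^ 2) (-(1/2) * (2 * x)) x := by
    simpa using ((hasDerivAt_pow 2 x).const_mul (-(1/2):ℝ))
  have h3 := (hasDerivAt_neg x).mul h1.exp
  refine h3.congr_deriv ?_
  ring

lemma aux_int {b : ℝ} (hb : 0 < b) : Integrable fun x : ℝ => x ^ 2 * exp (-b * x ^ 2) := by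
  have := integrable_rpow_mul_exp_neg_mul_sq hb (s := 2) (by norm_num)
  refine this.congr ?_
  filter_upwards with x
  rw [show ((2:ℝ)) = ((2:ℕ):ℝ) by norm_num, Real.rpow_natCast]

lemma aux_tendsto : Tendsto (fun x : ℝ => x * exp (-(1/2) * x ^ 2)) atTop (nhds 0) := by
  have h := rpow_mul_exp_neg_mul_sq_isLittleO_exp_neg (b := 1/2) (by norm_num) 1
  have h2 : Tendsto (fun x : ℝ => exp (-(1/2) * x)) atTop (nhds 0) := by
    have hm : Tendsto (fun x : ℝ => (1/2) * x) atTop atTop :=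
      tendsto_id.const_mul_atTop (by norm_num)
    have := Real.tendsto_exp_neg_atTop_nhds_zero.comp hm
    refine this.congr fun x => ?_
    simp [Function.comp]
  have := h.tendsto_zero_of_tendsto h2
  refine this.congr' ?_
  filter_upwards [eventually_ge_atTop (0:ℝ)] with x hx
  rw [Real.rpow_one]

lemma moment2 : ∫ x : ℝ, x ^ 2 * exp (-(1/2) * x ^ 2) = Real.sqrt (2 * π) := by
  have hint : Integrable fun x : ℝ => x ^ 2 * exp (-(1/2) * x ^ 2) := aux_int (by norm_num)
  have hint2 : Integrable fun x : ℝ => exp (-(1/2) * x ^ 2) := integrable_exp_neg_mul_sq (by norm_num)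
  have hd := aux_deriv
  have htop : Tendsto (fun x : ℝ => -x * exp (-(1/2) * x ^ 2)) atTop (nhds 0) := by
    simpa [neg_mul] using aux_tendsto.neg
  have hbot : Tendsto (fun x : ℝ => -x * exp (-(1/2) * x ^ 2)) atBot (nhds 0) := by
    have := aux_tendsto.comp tendsto_neg_atBot_atTop
    refine this.congr fun x => ?_
    simp [Function.comp, neg_sq]
  have hIoi : ∫ x in Ioi (0:ℝ), (x ^ 2 * exp (-(1/2) * x ^ 2) - exp (-(1/2) * x ^ 2)) = 0 := by
    have := integral_Ioi_of_hasDerivAt_of_tendsto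
      (f := fun x : ℝ => -x * exp (-(1/2) * x ^ 2)) (a := 0)
      (hd 0).continuousAt.continuousWithinAt (fun x _ => hd x)
      ((hint.sub hint2).integrableOn) htop
    simpa using this
  have hIic : ∫ x in Iic (0:ℝ), (x ^ 2 * exp (-(1/2) * x ^ 2) - exp (-(1/2) * x ^ 2)) = 0 := by
    have := integral_Iic_of_hasDerivAt_of_tendsto
      (f := fun x : ℝ => -x * exp (-(1/2) * x ^ 2)) (a := 0)
      (hd 0).continuousAt.continuousWithinAt (fun x _ => hd x)
      ((hint.sub hint2).integrableOn) hbot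
    simpa using this
  have hsplit := intervalIntegral.integral_Iic_add_Ioi (b := (0:ℝ)) (μ := volume)
    (hint.sub hint2).integrableOn (hint.sub hint2).integrableOn
  have hzero : ∫ x : ℝ, (x ^ 2 * exp (-(1/2) * x ^ 2) - exp (-(1/2) * x ^ 2)) = 0 := by
    simp only [Pi.sub_apply] at hsplit
    rw [← hsplit, hIic, hIoi]; ring
  have := integral_sub hint hint2
  rw [hzero] at this
  have h2 : ∫ x : ℝ, exp (-(1/2) * x ^ 2) = Real.sqrt (2 * π) := by
    rw [integral_gaussian]
    rw [show π / (1/2) = 2 * π by ring]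
  linarith [this, h2]

lemma pdf01 (x : ℝ) : gaussianPDFReal 0 1 x = (Real.sqrt (2*π))⁻¹ * exp (-(1/2) * x^2) := by
  rw [gaussianPDFReal]
  push_cast
  rw [mul_one, sub_zero, show -x^2/(2*1) = -(1/2)*x^2 by ring]

lemma gauss01_int_iff (g : ℝ → ℝ) :
    Integrable g (gaussianReal 0 1) ↔
      Integrable (fun x => g x * ((Real.sqrt (2*π))⁻¹ * exp (-(1/2) * x^2))) := by
  rw [gaussianReal_of_var_ne_zero 0 one_ne_zero,
    integrable_withDensity_iff (measurable_gaussianPDF 0 1)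
      (Filter.Eventually.of_forall fun x => ENNReal.ofReal_lt_top)]
  constructor <;> intro h <;> refine h.congr (Filter.Eventually.of_forall fun x => ?_) <;>
    simp only [gaussianPDF, pdf01] <;> rw [ENNReal.toReal_ofReal (by positivity)]

lemma gauss01_integral (g : ℝ → ℝ) :
    ∫ x, g x ∂(gaussianReal 0 1)
      = ∫ x : ℝ, ((Real.sqrt (2*π))⁻¹ * exp (-(1/2) * x^2)) * g x := by
  rw [gaussianReal_of_var_ne_zero 0 one_ne_zero]
  have h : (gaussianPDF 0 1) = fun x => ((gaussianPDFReal 0 1 x).toNNReal : ℝ≥0∞) := rfl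
  rw [h, integral_withDensity_eq_integral_smul
    ((measurable_gaussianPDFReal 0 1).real_toNNReal) g]
  congr 1
  ext x
  rw [NNReal.smul_def, Real.coe_toNNReal _ (gaussianPDFReal_nonneg 0 1 x), pdf01, smul_eq_mul]
lemma sqrt2pi_pos : (0:ℝ) < Real.sqrt (2*π) := Real.sqrt_pos.2 (by positivity)

lemma gauss01_integrable_sq : Integrable (fun x : ℝ => x^2) (gaussianReal 0 1) := by
  rw [gauss01_int_iff]
  refine ((aux_int (by norm_num : (0:ℝ) < 1/2)).const_mul ((Real.sqrt (2*π))⁻¹)).congr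
    (Filter.Eventually.of_forall fun x => ?_)
  ring

lemma gauss01_moment_sq : ∫ x, x^2 ∂(gaussianReal 0 1) = 1 := by
  rw [gauss01_integral]
  have : ∀ x : ℝ, ((Real.sqrt (2*π))⁻¹ * exp (-(1/2) * x^2)) * x^2
      = (Real.sqrt (2*π))⁻¹ * (x^2 * exp (-(1/2) * x^2)) := fun x => by ring
  simp_rw [this, integral_const_mul, moment2]
  exact inv_mul_cancel₀ sqrt2pi_pos.ne'

lemma exp_shift (t x : ℝ) : exp (t*x) * ((Real.sqrt (2*π))⁻¹ * exp (-(1/2) * x^2))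
    = ((Real.sqrt (2*π))⁻¹ * exp (t^2/2)) * exp (-(1/2) * (x - t)^2) := by
  rw [mul_assoc, ← Real.exp_add, mul_comm (exp (t*x)), mul_assoc, ← Real.exp_add]
  congr 2
  ring

lemma gauss01_integrable_exp (t : ℝ) :
    Integrable (fun x : ℝ => exp (t*x)) (gaussianReal 0 1) := by
  rw [gauss01_int_iff]
  have base : Integrable (fun x : ℝ => exp (-(1/2) * (x - t)^2)) :=
    (integrable_exp_neg_mul_sq (by norm_num : (0:ℝ) < 1/2)).comp_sub_right t
  exact (base.const_mul _).congr (Filter.Eventually.of_forall fun x => (exp_shift t x).symm)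

lemma gauss01_mgf (t : ℝ) : ∫ x, exp (t*x) ∂(gaussianReal 0 1) = exp (t^2/2) := by
  rw [gauss01_integral]
  have : ∀ x : ℝ, ((Real.sqrt (2*π))⁻¹ * exp (-(1/2) * x^2)) * exp (t*x)
      = ((Real.sqrt (2*π))⁻¹ * exp (t^2/2)) * exp (-(1/2) * (x - t)^2) := fun x => by
    rw [mul_comm, exp_shift]
  simp_rw [this, integral_const_mul]
  rw [show (fun x : ℝ => exp (-(1/2) * (x - t)^2)) = fun x : ℝ => (fun y => exp (-(1/2) * y^2)) (x - t) from rfl,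
    integral_sub_right_eq_self (fun y : ℝ => exp (-(1/2) * y^2)) t, integral_gaussian,
    show π / (1/2) = 2 * π by ring]
  field_simp


/-- Strong law for squares of independent Gaussians with unit variance: if
`Y i ~ N(μ i, 1)` are independent, `Z p = ∑_{i<p} (Y i)²`, `λ p = ∑_{i<p} (μ i)²`, and
`(λ p / p)` is bounded, then `Z p / p - 1 - λ p / p → 0` almost surely. -/
theorem noncentral_chisq_lln {Ω : Type*} [MeasurableSpace Ω]
    (P : Measure Ω) [IsProbabilityMeasure P]
    (Y : ℕ → Ω → ℝ) (μ : ℕ → ℝ)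
    (hmeas : ∀ i, Measurable (Y i))
    (hindep : iIndepFun Y P)
    (hlaw : ∀ i, P.map (Y i) = gaussianReal (μ i) 1)
    (hbdd : ∃ C : ℝ, ∀ p : ℕ, 1 ≤ p → (∑ i ∈ Finset.range p, (μ i) ^ 2) / p ≤ C) :
    ∀ᵐ ω ∂P, Tendsto
      (fun p : ℕ => (∑ i ∈ Finset.range p, (Y i ω) ^ 2) / p - 1 -
        (∑ i ∈ Finset.range p, (μ i) ^ 2) / p)
      atTop (nhds 0) := by
  classical
  obtain ⟨C₀, hC₀⟩ := hbdd
  set C := max C₀ 1 with hCdef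
  have hC1 : (1:ℝ) ≤ C := le_max_right _ _
  have hCpos : (0:ℝ) < C := lt_of_lt_of_le one_pos hC1
  set Λ : ℕ → ℝ := fun p => ∑ i ∈ Finset.range p, (μ i)^2 with hΛdef
  have hΛnonneg : ∀ p, 0 ≤ Λ p := fun p => Finset.sum_nonneg fun i _ => sq_nonneg _
  have hΛle : ∀ p : ℕ, Λ p ≤ C * p := by
    intro p
    rcases Nat.eq_zero_or_pos p with h | h
    · simp [hΛdef, h]
    · have hp : (0:ℝ) < p := by exact_mod_cast h
      have h1 : Λ p / p ≤ C₀ := hC₀ p h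
      have h2 : Λ p / p ≤ C := h1.trans (le_max_left _ _)
      calc Λ p = (Λ p / p) * p := by field_simp
      _ ≤ C * p := mul_le_mul_of_nonneg_right h2 hp.le
  -- centered variables
  set W : ℕ → Ω → ℝ := fun i ω => Y i ω - μ i with hWdef
  have hWmeas : ∀ i, Measurable (W i) := fun i => (hmeas i).sub measurable_const
  have hWmap : ∀ i, P.map (W i) = gaussianReal 0 1 := by
    intro i
    have h : W i = (fun x => x + (-μ i)) ∘ Y i := by
      funext ω; simp [hWdef, sub_eq_add_neg]
    rw [h, ← Measure.map_map (measurable_add_const (-μ i)) (hmeas i), hlaw i,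
      gaussianReal_map_add_const]
    simp
  -- Part A: strong law for squares
  have hsq_asm : ∀ m : Measure ℝ, AEStronglyMeasurable (fun x : ℝ => x^2) m :=
    fun m => (measurable_id.pow_const 2).aestronglyMeasurable
  have hXint : Integrable (fun ω => (W 0 ω)^2) P := by
    have h1 : Integrable (fun x : ℝ => x^2) (P.map (W 0)) := by
      rw [hWmap 0]; exact gauss01_integrable_sq
    exact (integrable_map_measure (hsq_asm _) (hWmeas 0).aemeasurable).1 h1
  have hXindep : Pairwise (Function.onFun (IndepFun · · P) fun i ω => (W i ω)^2) := by
    intro i j hij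
    exact (hindep.indepFun hij).comp ((measurable_id.sub_const (μ i)).pow_const 2)
      ((measurable_id.sub_const (μ j)).pow_const 2)
  have hXident : ∀ i, IdentDistrib (fun ω => (W i ω)^2) (fun ω => (W 0 ω)^2) P P := by
    intro i
    have hw : IdentDistrib (W i) (W 0) P P :=
      ⟨(hWmeas i).aemeasurable, (hWmeas 0).aemeasurable, by rw [hWmap i, hWmap 0]⟩
    exact hw.comp (measurable_id.pow_const 2)
  have hE : ∫ ω, (W 0 ω)^2 ∂P = 1 := by
    have h := integral_map (hWmeas 0).aemeasurable (hsq_asm (P.map (W 0)))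
    rw [hWmap 0, gauss01_moment_sq] at h
    exact h.symm
  have hA : ∀ᵐ ω ∂P, Tendsto (fun n : ℕ => (∑ i ∈ Finset.range n, (W i ω)^2) / n)
      atTop (nhds 1) := by
    have := strong_law_ae_real (fun i ω => (W i ω)^2) hXint hXindep hXident
    rwa [hE] at this
  -- Part B: weighted sum
  set V : ℕ → Ω → ℝ := fun i ω => μ i * W i ω with hVdef
  have hVmeas : ∀ i, Measurable (V i) := fun i => (hWmeas i).const_mul _
  have hVindep : iIndepFun V P :=
    hindep.comp (fun i x => μ i * (x - μ i))
      (fun i => (measurable_id.sub_const _).const_mul _)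
  have hexp_asm : ∀ (c : ℝ) (m : Measure ℝ),
      AEStronglyMeasurable (fun x : ℝ => exp (c * x)) m :=
    fun c m => (measurable_id.const_mul c).exp.aestronglyMeasurable
  have hVint : ∀ (t : ℝ) (i : ℕ), Integrable (fun ω => exp (t * V i ω)) P := by
    intro t i
    have h1 : Integrable (fun x : ℝ => exp ((t * μ i) * x)) (P.map (W i)) := by
      rw [hWmap i]; exact gauss01_integrable_exp _
    have h2 := (integrable_map_measure (hexp_asm _ _) (hWmeas i).aemeasurable).1 h1
    refine h2.congr (Filter.Eventually.of_forall fun ω => ?_)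
    simp only [Function.comp, hVdef, mul_assoc]
  have hVmgf : ∀ (t : ℝ) (i : ℕ), mgf (V i) P t = exp ((t * μ i)^2 / 2) := by
    intro t i
    have h := integral_map (hWmeas i).aemeasurable (hexp_asm (t * μ i) (P.map (W i)))
    rw [hWmap i, gauss01_mgf] at h
    have heq : (fun ω => exp (t * V i ω)) = fun ω => exp ((t * μ i) * W i ω) := by
      funext ω
      simp only [hVdef]
      exact congrArg exp (mul_assoc t (μ i) (W i ω)).symm
    rw [mgf, heq]
    exact h.symm
  set S : ℕ → Ω → ℝ := fun p => ∑ i ∈ Finset.range p, V i with hSdef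
  have hSapp : ∀ p ω, S p ω = ∑ i ∈ Finset.range p, V i ω := by
    intro p ω; rw [hSdef]; exact Finset.sum_apply _ _ _
  have hTmgf : ∀ (p : ℕ) (t : ℝ), mgf (S p) P t = exp (t^2 * Λ p / 2) := by
    intro p t
    rw [hSdef, hVindep.mgf_sum hVmeas]
    calc ∏ i ∈ Finset.range p, mgf (V i) P t
        = ∏ i ∈ Finset.range p, exp ((t * μ i)^2 / 2) :=
          Finset.prod_congr rfl fun i _ => hVmgf t i
      _ = exp (∑ i ∈ Finset.range p, (t * μ i)^2 / 2) := (Real.exp_sum _ _).symm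
      _ = exp (t^2 * Λ p / 2) := by
          congr 1
          rw [hΛdef, Finset.mul_sum, ← Finset.sum_div]
          congr 1
          exact Finset.sum_congr rfl fun i _ => by ring
  have hTint : ∀ (p : ℕ) (t : ℝ), Integrable (fun ω => exp (t * S p ω)) P := by
    intro p t
    exact hVindep.integrable_exp_mul_sum hVmeas (fun i _ => hVint t i)
  -- tail bound
  have htail : ∀ ε : ℝ, 0 < ε → ∀ p : ℕ, 1 ≤ p →
      (P {ω | ε * p ≤ |S p ω|}).toReal ≤ 2 * exp (-(ε^2/(2*C)) * p) := by
    intro ε hε p hp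
    have hp0 : (0:ℝ) ≤ p := Nat.cast_nonneg p
    set t : ℝ := ε / C with htdef
    have ht : 0 ≤ t := div_nonneg hε.le hCpos.le
    have hmgfle : mgf (S p) P t ≤ exp (ε^2 * p / (2*C)) := by
      rw [hTmgf p t]
      apply Real.exp_le_exp.2
      have : t^2 * Λ p ≤ t^2 * (C * p) := mul_le_mul_of_nonneg_left (hΛle p) (sq_nonneg t)
      calc t^2 * Λ p / 2 ≤ t^2 * (C * p) / 2 := by linarith
        _ = ε^2 * p / (2*C) * (1) := by
            rw [htdef]; field_simp
        _ = ε^2 * p / (2*C) := by ring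
    have hkey : exp (-t * (ε * p)) * mgf (S p) P t ≤ exp (-(ε^2/(2*C)) * p) := by
      calc exp (-t * (ε * p)) * mgf (S p) P t
          ≤ exp (-t * (ε * p)) * exp (ε^2 * p / (2*C)) := by
            exact mul_le_mul_of_nonneg_left hmgfle (Real.exp_nonneg _)
        _ = exp (-t * (ε * p) + ε^2 * p / (2*C)) := (Real.exp_add _ _).symm
        _ ≤ exp (-(ε^2/(2*C)) * p) := by
            apply Real.exp_le_exp.2
            rw [htdef]
            have : -(ε / C) * (ε * p) + ε ^ 2 * p / (2 * C) = -(ε^2/(2*C)) * p := by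
              field_simp
              ring
            rw [this]
    have hup : (P {ω | ε * p ≤ S p ω}).toReal ≤ exp (-(ε^2/(2*C)) * p) :=
      (measure_ge_le_exp_mul_mgf (ε * p) ht (hTint p t)).trans hkey
    have hmgfneg : mgf (S p) P (-t) = mgf (S p) P t := by rw [hTmgf, hTmgf, neg_pow]; ring_nf
    have hlow : (P {ω | S p ω ≤ -(ε * p)}).toReal ≤ exp (-(ε^2/(2*C)) * p) := by
      have h := measure_le_le_exp_mul_mgf (μ := P) (X := S p) (-(ε * p))
        (neg_nonpos.2 ht) (hTint p (-t))
      refine h.trans ?_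
      rw [hmgfneg]
      calc exp (-(-t) * -(ε * p)) * mgf (S p) P t = exp (-t * (ε * p)) * mgf (S p) P t := by
            ring_nf
        _ ≤ exp (-(ε^2/(2*C)) * p) := hkey
    have hsub : {ω | ε * p ≤ |S p ω|} ⊆ {ω | ε * p ≤ S p ω} ∪ {ω | S p ω ≤ -(ε * p)} := by
      intro ω hω
      simp only [Set.mem_setOf_eq] at hω ⊢
      rcases le_abs.1 hω with h | h
      · exact Or.inl h
      · exact Or.inr (show S p ω ≤ -(ε * ↑p) by linarith)
    calc (P {ω | ε * p ≤ |S p ω|}).toReal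
        ≤ (P ({ω | ε * p ≤ S p ω} ∪ {ω | S p ω ≤ -(ε * p)})).toReal := by
          apply ENNReal.toReal_mono (measure_ne_top _ _) (measure_mono hsub)
      _ ≤ ((P {ω | ε * p ≤ S p ω}) + P {ω | S p ω ≤ -(ε * p)}).toReal := by
          apply ENNReal.toReal_mono ?_ (measure_union_le _ _)
          simp [ENNReal.add_ne_top, measure_ne_top]
      _ = (P {ω | ε * p ≤ S p ω}).toReal + (P {ω | S p ω ≤ -(ε * p)}).toReal :=
          ENNReal.toReal_add (measure_ne_top _ _) (measure_ne_top _ _)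
      _ ≤ 2 * exp (-(ε^2/(2*C)) * p) := by linarith
  -- Borel-Cantelli
  have hBC : ∀ ε : ℝ, 0 < ε → ∀ᵐ ω ∂P, ∀ᶠ p : ℕ in atTop, |S p ω| < ε * p := by
    intro ε hε
    set a : ℝ := ε^2/(2*C) with hadef
    have ha : 0 < a := by positivity
    set s : ℕ → Set Ω := fun p => {ω | ε * p ≤ |S p ω|} with hsdef
    have hbound : ∀ p : ℕ, P (s p) ≤ ENNReal.ofReal (2 * exp (-a * p)) := by
      intro p
      rcases Nat.eq_zero_or_pos p with h | h
      · subst h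
        refine (prob_le_one).trans ?_
        simp only [Nat.cast_zero, mul_zero, Real.exp_zero, mul_one]
        exact ENNReal.one_le_ofReal.2 one_le_two
      · rw [← ENNReal.ofReal_toReal (measure_ne_top P (s p))]
        exact ENNReal.ofReal_le_ofReal (htail ε hε p h)
    have hsummable : Summable (fun p : ℕ => 2 * exp (-a * p)) := by
      have h1 : ∀ p : ℕ, exp (-a * p) = (exp (-a))^p := by
        intro p
        rw [← Real.exp_nat_mul]
        ring_nf
      have h2 : Summable (fun p : ℕ => (exp (-a))^p) :=
        summable_geometric_of_lt_one (Real.exp_nonneg _)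
          (Real.exp_lt_one_iff.2 (by linarith))
      exact Summable.congr (h2.mul_left 2) (fun p => by rw [h1 p])
    have htsum : ∑' p, P (s p) ≠ ⊤ := by
      refine ne_top_of_le_ne_top ?_ (ENNReal.tsum_le_tsum hbound)
      rw [← ENNReal.ofReal_tsum_of_nonneg (fun p => by positivity) hsummable]
      exact ENNReal.ofReal_ne_top
    filter_upwards [ae_eventually_notMem htsum] with ω hω
    filter_upwards [hω] with p hp
    simpa [hsdef, not_le] using hp
  have hBCall : ∀ᵐ ω ∂P, ∀ k : ℕ, ∀ᶠ p : ℕ in atTop, |S p ω| < (1/((k:ℝ)+1)) * p := by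
    rw [ae_all_iff]
    intro k
    exact hBC (1/((k:ℝ)+1)) (by positivity)
  have hB : ∀ᵐ ω ∂P, Tendsto (fun p : ℕ => S p ω / p) atTop (nhds 0) := by
    filter_upwards [hBCall] with ω hω
    rw [NormedAddCommGroup.tendsto_nhds_zero]
    intro ε hε
    obtain ⟨k, hk⟩ := exists_nat_one_div_lt hε
    filter_upwards [hω k, eventually_ge_atTop 1] with p hp hp1
    have hp0 : (0:ℝ) < p := by exact_mod_cast hp1
    rw [Real.norm_eq_abs, abs_div, abs_of_pos hp0, div_lt_iff₀ hp0]
    calc |S p ω| < (1/((k:ℝ)+1)) * p := hp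
      _ ≤ ε * p := mul_le_mul_of_nonneg_right (by exact_mod_cast hk.le) hp0.le
  -- combine
  filter_upwards [hA, hB] with ω hA' hB'
  have heq : ∀ p : ℕ, (∑ i ∈ Finset.range p, (W i ω)^2) / p - 1 + 2 * (S p ω / p)
      = (∑ i ∈ Finset.range p, (Y i ω)^2) / p - 1 - Λ p / p := by
    intro p
    have h1 : ∑ i ∈ Finset.range p, (Y i ω)^2
        = ∑ i ∈ Finset.range p, ((W i ω)^2 + 2 * (μ i * W i ω) + (μ i)^2) :=
      Finset.sum_congr rfl fun i _ => by rw [hWdef]; ring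
    rw [h1, Finset.sum_add_distrib, Finset.sum_add_distrib, ← Finset.mul_sum,
      ← hSapp p ω, hΛdef]
    ring
  have hfinal : Tendsto (fun p : ℕ =>
      (∑ i ∈ Finset.range p, (W i ω)^2) / p - 1 + 2 * (S p ω / p)) atTop (nhds 0) := by
    have := (hA'.sub_const 1).add (hB'.const_mul 2)
    simpa using this
  exact hfinal.congr heq
end
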